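/- The polynomial λ⁴ + λ³ − 132λ² + 121λ + 14641 is irreducible over ℚ and has no root of the form 11ζ with ζ a root of unity; in particular, no root of this polynomial divided by 11 is a root of unity. -/

import Mathlib

open Polynomial

lemma monic_deg2_eq {R : Type*} [CommRing R] {p : R[X]} (hm : p.Monic) (hd : p.natDegree = 2) :
    p = X^2 + C (p.coeff 1) * X + C (p.coeff 0) := by
  have h2 : p.coeff 2 = 1 := by have := hm.coeff_natDegree; rwa [hd] at this
  ext n
  match n with
  | 0 => simp
  | 1 => simp [coeff_X_pow]
  | 2 => simp [h2, coeff_X_pow]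
  | (n+3) =>
    rw [coeff_eq_zero_of_natDegree_lt (by omega : p.natDegree < n+3)]
    simp [coeff_X_pow, coeff_C]

lemma root_of_deg1_dvd {F : Type*} [Field F] {a f : F[X]} (ha : a.natDegree = 1)
    (hdvd : a ∣ f) : ∃ x : F, f.eval x = 0 := by
  have h1 : a.coeff 1 ≠ 0 := by
    have h0 : a ≠ 0 := fun h => by simp [h] at ha
    have := leadingCoeff_ne_zero.mpr h0
    rwa [leadingCoeff, ha] at this
  refine ⟨-(a.coeff 0) / (a.coeff 1), ?_⟩
  obtain ⟨q, rfl⟩ := hdvd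
  have : a.eval (-(a.coeff 0) / (a.coeff 1)) = 0 := by
    conv_lhs => rw [eq_X_add_C_of_natDegree_le_one ha.le]
    field_simp
    simp
    field_simp
    ring
  simp [this]

lemma irred_quartic {F : Type*} [Field F] {f : F[X]} (hm : f.Monic) (hd : f.natDegree = 4)
    (hroot : ∀ x : F, f.eval x ≠ 0)
    (hquad : ∀ a b : F, ¬ ((X^2 + C a * X + C b : F[X]) ∣ f)) : Irreducible f := by
  have hf0 : f ≠ 0 := hm.ne_zero
  constructor
  · intro hu
    have := natDegree_eq_zero_of_isUnit hu
    omega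
  · intro a b hab
    by_contra hcon
    push_neg at hcon
    obtain ⟨hua, hub⟩ := hcon
    have ha0 : a ≠ 0 := by rintro rfl; simp at hab; exact hf0 hab
    have hb0 : b ≠ 0 := by rintro rfl; simp at hab; exact hf0 hab
    have hsum : a.natDegree + b.natDegree = 4 := by
      rw [← natDegree_mul ha0 hb0, ← hab, hd]
    have hda : 1 ≤ a.natDegree := by
      by_contra h
      push_neg at h
      interval_cases h' : a.natDegree
      · rw [eq_C_of_natDegree_eq_zero h'] at ha0 hua
        exact hua (isUnit_C.mpr (isUnit_iff_ne_zero.mpr (by simpa using ha0)))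
    have hdb : 1 ≤ b.natDegree := by
      by_contra h
      push_neg at h
      interval_cases h' : b.natDegree
      · rw [eq_C_of_natDegree_eq_zero h'] at hb0 hub
        exact hub (isUnit_C.mpr (isUnit_iff_ne_zero.mpr (by simpa using hb0)))
    -- some factor has degree 1 or 2
    have key : ∀ p q : F[X], p ≠ 0 → f = p * q → p.natDegree = 1 ∨ p.natDegree = 2 → False := by
      intro p q hp0 hpq hcases
      rcases hcases with h1 | h2
      · obtain ⟨x, hx⟩ := root_of_deg1_dvd h1 ⟨q, hpq⟩
        exact hroot x hx
      · set p' := p * C (p.leadingCoeff)⁻¹ with hp'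
        have hmon : p'.Monic := monic_mul_leadingCoeff_inv hp0
        have hdeg' : p'.natDegree = 2 := by
          rw [hp', natDegree_mul_C (by simp [leadingCoeff_ne_zero.mpr hp0]), h2]
        have hdvd : p' ∣ f := by
          refine Dvd.dvd.trans ⟨C (p.leadingCoeff), ?_⟩ ⟨q, hpq⟩
          rw [hp', mul_assoc, ← C_mul, inv_mul_cancel₀ (leadingCoeff_ne_zero.mpr hp0), C_1, mul_one]
        rw [monic_deg2_eq hmon hdeg'] at hdvd
        exact hquad _ _ hdvd
    rcases (by omega : a.natDegree = 1 ∨ a.natDegree = 2 ∨ b.natDegree = 1 ∨ b.natDegree = 2) with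
      h | h | h | h
    · exact key a b ha0 hab (Or.inl h)
    · exact key a b ha0 hab (Or.inr h)
    · exact key b a hb0 (by rw [hab, mul_comm]) (Or.inl h)
    · exact key b a hb0 (by rw [hab, mul_comm]) (Or.inr h)

instance : Fact (Nat.Prime 7) := ⟨by norm_num⟩

lemma hdec1 : ∀ x : ZMod 7, x^4 + x^3 - 132*x^2 + 121*x + 14641 ≠ 0 := by decide

lemma hdec2 : ∀ a b : ZMod 7, ¬(121 - b + 132*a + 2*(a*b) + a^2 - a^3 = 0 ∧
    14641 + 132*b + b^2 + a*b - a^2*b = 0) := by decide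

lemma g_irred : Irreducible (X^4 + X^3 - C 132 * X^2 + C 121 * X + C 14641 : (ZMod 7)[X]) := by
  have hm : (X^4 + X^3 - C 132 * X^2 + C 121 * X + C 14641 : (ZMod 7)[X]).Monic := by monicity!
  have hd : (X^4 + X^3 - C 132 * X^2 + C 121 * X + C 14641 : (ZMod 7)[X]).natDegree = 4 := by
    compute_degree!
  refine irred_quartic hm hd ?_ ?_
  · intro x
    have hx := hdec1 x
    simpa using hx
  · intro a b hdvd
    have hid : (X^4 + X^3 - C 132 * X^2 + C 121 * X + C 14641 : (ZMod 7)[X]) =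
        (X^2 + C a * X + C b) * (X^2 + (1 - C a)*X + (C a^2 - C a - C b - 132)) +
        (C (121 - b + 132*a + 2*(a*b) + a^2 - a^3) * X +
          C (14641 + 132*b + b^2 + a*b - a^2*b)) := by
      simp only [C_sub, C_add, C_mul, C_pow, map_ofNat]; ring
    have hRdvd : (X^2 + C a * X + C b : (ZMod 7)[X]) ∣
        (C (121 - b + 132*a + 2*(a*b) + a^2 - a^3) * X +
          C (14641 + 132*b + b^2 + a*b - a^2*b)) := by
      have h := dvd_sub hdvd (dvd_mul_right (X^2 + C a * X + C b)
        (X^2 + (1 - C a)*X + (C a^2 - C a - C b - 132)))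
      rw [hid] at h
      simpa using h
    have hR0 : (C (121 - b + 132*a + 2*(a*b) + a^2 - a^3) * X +
        C (14641 + 132*b + b^2 + a*b - a^2*b) : (ZMod 7)[X]) = 0 := by
      by_contra h
      have h2 : degree (X^2 + C a * X + C b : (ZMod 7)[X]) = 2 := by compute_degree!
      have h3 := (degree_le_of_dvd hRdvd h).trans degree_linear_le
      rw [h2] at h3
      norm_num at h3
    have e1 := congrArg (fun p => coeff p 1) hR0
    have e0 := congrArg (fun p => coeff p 0) hR0
    simp only [coeff_add, coeff_C_mul, coeff_X_one, coeff_X_zero, coeff_C, coeff_zero,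
      mul_one, mul_zero, add_zero, zero_add] at e1 e0
    norm_num at e1 e0
    exact hdec2 a b ⟨e1, e0⟩


lemma fZ_irred : Irreducible (X^4 + X^3 - C 132 * X^2 + C 121 * X + C 14641 : ℤ[X]) := by
  have hm : (X^4 + X^3 - C 132 * X^2 + C 121 * X + C 14641 : ℤ[X]).Monic := by monicity!
  apply hm.irreducible_of_irreducible_map (Int.castRingHom (ZMod 7))
  have : map (Int.castRingHom (ZMod 7)) (X^4 + X^3 - C 132 * X^2 + C 121 * X + C 14641 : ℤ[X]) =
      (X^4 + X^3 - C 132 * X^2 + C 121 * X + C 14641 : (ZMod 7)[X]) := by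
    simp [Polynomial.map_add, Polynomial.map_sub, Polynomial.map_mul, Polynomial.map_pow, map_ofNat]
  rw [this]
  exact g_irred

lemma chiQ_irred : Irreducible (X ^ 4 + X ^ 3 - C 132 * X ^ 2 + C 121 * X + C 14641 : ℚ[X]) := by
  have hm : (X^4 + X^3 - C 132 * X^2 + C 121 * X + C 14641 : ℤ[X]).Monic := by monicity!
  have h := (IsPrimitive.Int.irreducible_iff_irreducible_map_cast hm.isPrimitive).mp fZ_irred
  have : map (Int.castRingHom ℚ) (X^4 + X^3 - C 132 * X^2 + C 121 * X + C 14641 : ℤ[X]) =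
      (X ^ 4 + X ^ 3 - C 132 * X ^ 2 + C 121 * X + C 14641 : ℚ[X]) := by
    simp [Polynomial.map_add, Polynomial.map_sub, Polynomial.map_mul, Polynomial.map_pow, map_ofNat]
  rwa [this] at h


/-- The polynomial λ⁴ + λ³ − 132λ² + 121λ + 14641 is irreducible over ℚ,
and no root α (in ℂ) has α/11 a root of unity. -/
theorem chi_11_irreducible_no_unit_root :
    Irreducible (X ^ 4 + X ^ 3 - C 132 * X ^ 2 + C 121 * X + C 14641 : ℚ[X]) ∧
    ∀ α : ℂ, (aeval α) (X ^ 4 + X ^ 3 - C 132 * X ^ 2 + C 121 * X + C 14641 : ℚ[X]) = 0 →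
      ∀ n : ℕ, 0 < n → (α / 11) ^ n ≠ 1 := by
  refine ⟨chiQ_irred, ?_⟩
  intro α hα n hn
  intro hζ
  set ζ : ℂ := α / 11 with hζdef
  have hαeq : α^4 + α^3 - 132*α^2 + 121*α + 14641 = 0 := by
    simp only [map_add, map_sub, map_mul, map_pow, aeval_X, aeval_C, map_ofNat] at hα
    exact hα
  have hζint : IsIntegral ℤ ζ := ⟨X^n - C 1, monic_X_pow_sub_C 1 hn.ne', by simp [hζ]⟩
  have hζQ : IsIntegral ℚ ζ := hζint.tower_top
  set q : ℚ[X] := X^4 + C (1/11) * X^3 - C (12/11) * X^2 + C (1/11) * X + 1 with hqdef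
  have hq0 : aeval ζ q = 0 := by
    simp only [hqdef, map_add, map_sub, map_mul, map_pow, aeval_X, aeval_C, map_one]
    rw [hζdef]
    push_cast
    field_simp
    norm_num
    linear_combination (11 : ℂ) * hαeq
  have hqmonic : q.Monic := by rw [hqdef]; monicity!
  have hqdeg : q.natDegree = 4 := by rw [hqdef]; compute_degree!
  have hmindvd : minpoly ℚ ζ ∣ q := minpoly.dvd ℚ ζ hq0
  have hχmonic : (X ^ 4 + X ^ 3 - C 132 * X ^ 2 + C 121 * X + C 14641 : ℚ[X]).Monic := by monicity!
  have hmono : minpoly ℚ α = (X ^ 4 + X ^ 3 - C 132 * X ^ 2 + C 121 * X + C 14641 : ℚ[X]) :=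
    (minpoly.eq_of_irreducible_of_monic chiQ_irred hα hχmonic).symm
  set m : ℚ[X] := minpoly ℚ ζ with hmdef
  have hcompX : ((C (1/11 : ℚ) * X).comp (C (11:ℚ) * X)) = X := by
    simp only [mul_comp, C_comp, X_comp]
    rw [← mul_assoc, ← C_mul]
    norm_num
  have hs0 : m.comp (C (1/11 : ℚ) * X) ≠ 0 := by
    intro h
    have h2 : (m.comp (C (1/11 : ℚ) * X)).comp (C (11:ℚ) * X) = 0 := by rw [h]; simp
    rw [comp_assoc, hcompX, comp_X] at h2
    exact minpoly.ne_zero hζQ h2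
  have haevals : aeval α (m.comp (C (1/11 : ℚ) * X)) = 0 := by
    rw [aeval_comp]
    have h3 : aeval α (C (1/11 : ℚ) * X) = ζ := by
      simp [hζdef]
      ring
    rw [h3, minpoly.aeval]
  have hdvd2 : (X ^ 4 + X ^ 3 - C 132 * X ^ 2 + C 121 * X + C 14641 : ℚ[X]) ∣
      m.comp (C (1/11 : ℚ) * X) := hmono ▸ minpoly.dvd ℚ α haevals
  have hle := natDegree_le_of_dvd hdvd2 hs0
  rw [natDegree_comp] at hle
  have hdeg1 : natDegree (C (1/11:ℚ) * X) = 1 := by compute_degree!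
  have hχdeg : (X ^ 4 + X ^ 3 - C 132 * X ^ 2 + C 121 * X + C 14641 : ℚ[X]).natDegree = 4 := by
    compute_degree!
  rw [hχdeg, hdeg1, mul_one] at hle
  have hqeq : q = m :=
    eq_of_monic_of_dvd_of_natDegree_le (minpoly.monic hζQ) hqmonic hmindvd (by omega)
  have hint : m = (minpoly ℤ ζ).map (algebraMap ℤ ℚ) :=
    minpoly.isIntegrallyClosed_eq_field_fractions' (K := ℚ) hζint
  have hc3 : q.coeff 3 = (1/11 : ℚ) := by
    simp [hqdef, coeff_X_pow, coeff_C, coeff_one]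
  rw [hqeq, hint] at hc3
  rw [coeff_map] at hc3
  have hfin : ((minpoly ℤ ζ).coeff 3 : ℤ) * 11 = 1 := by
    have h11 : ((minpoly ℤ ζ).coeff 3 : ℚ) = 1/11 := hc3
    field_simp at h11
    exact_mod_cast h11
  omega
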